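/- arXiv:1309.3112 — 3 statements merged into one kernel-verified Lean document; each statement's English description precedes it below -/
import Mathlib

section
/- The set {y ∈ ℝ : [[1,y],[y,2]] ⪰ 0 and [[2y,2],[2,y]] ⪰ 0} equals the singleton {√2}. -/
open Matrix

lemma psd_fin_two_iff {a b c : ℝ} :
    (!![a, b; b, c] : Matrix (Fin 2) (Fin 2) ℝ).PosSemidef ↔ 0 ≤ a ∧ 0 ≤ c ∧ b^2 ≤ a*c := by
  constructor
  · intro h
    have h0 := h.dotProduct_mulVec_nonneg ![1, 0]
    have h1 := h.dotProduct_mulVec_nonneg ![0, 1]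
    simp [dotProduct, Matrix.mulVec, Fin.sum_univ_two] at h0 h1
    refine ⟨h0, h1, ?_⟩
    have key : ∀ t : ℝ, 0 ≤ a * (t * t) + 2*b * t + c := by
      intro t
      have := h.dotProduct_mulVec_nonneg ![t, 1]
      simp [dotProduct, Matrix.mulVec, Fin.sum_univ_two] at this
      nlinarith [this]
    have := discrim_le_zero key
    rw [discrim] at this
    nlinarith
  · rintro ⟨ha, hc, hd⟩
    rw [posSemidef_iff_dotProduct_mulVec]
    constructor
    · ext i j; fin_cases i <;> fin_cases j <;> rfl
    · intro x
      have : star x ⬝ᵥ (!![a, b; b, c] : Matrix (Fin 2) (Fin 2) ℝ) *ᵥ x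
          = a * (x 0)^2 + 2*b*(x 0)*(x 1) + c * (x 1)^2 := by
        simp [dotProduct, Matrix.mulVec, Fin.sum_univ_two]; ring
      rw [this]
      rcases ha.eq_or_lt with h | h
      · have hb : b = 0 := by nlinarith
        subst hb; simp [← h]; positivity
      · nlinarith [sq_nonneg (a*(x 0)+b*(x 1)), mul_nonneg (sub_nonneg.mpr hd) (sq_nonneg (x 1))]

/-- The spectrahedron `{y : [[1,y],[y,2]] ⪰ 0, [[2y,2],[2,y]] ⪰ 0}` is the singleton `{√2}`. -/
theorem irrational_spectrahedron :
    {y : ℝ | (!![1, y; y, 2] : Matrix (Fin 2) (Fin 2) ℝ).PosSemidef ∧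
      (!![2 * y, 2; 2, y] : Matrix (Fin 2) (Fin 2) ℝ).PosSemidef} = {Real.sqrt 2} := by
  ext y
  simp only [Set.mem_setOf_eq, Set.mem_singleton_iff, psd_fin_two_iff]
  constructor
  · rintro ⟨⟨-, -, h1⟩, hy, -, h2⟩
    have hy' : 0 ≤ y := by linarith
    have hy2 : y^2 = 2 := by nlinarith
    have : y = Real.sqrt (y^2) := (Real.sqrt_sq hy').symm
    rw [this, hy2]
  · rintro rfl
    have h2 : Real.sqrt 2 ^ 2 = 2 := Real.sq_sqrt (by norm_num)
    have hpos : (0:ℝ) ≤ Real.sqrt 2 := Real.sqrt_nonneg 2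
    refine ⟨⟨by norm_num, by norm_num, by nlinarith⟩, by positivity, by norm_num, by nlinarith⟩
end

section
/- Any point y ∈ ℝᵐ in the spectrahedron defined by [[1,2],[2,y₁]] ⪰ 0, and [[1,yₖ₋₁],[yₖ₋₁,yₖ]] ⪰ 0 for k = 2,…,m, satisfies yₘ ≥ 2^(2^m). -/
lemma psd_aux (b c : ℝ) (h : (!![1, b; b, c] : Matrix (Fin 2) (Fin 2) ℝ).PosSemidef) :
    b ^ 2 ≤ c := by
  have := h.dotProduct_mulVec_nonneg ![-b, 1]
  simp [Matrix.mulVec, dotProduct, Fin.sum_univ_succ] at this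
  nlinarith [this]

/-- Any point of the exponential spectrahedron satisfies `yₘ ≥ 2^(2^m)`. -/
theorem exponential_spectrahedron (m : ℕ) (hm : 1 ≤ m) (y : ℕ → ℝ)
    (h1 : (!![1, 2; 2, y 1] : Matrix (Fin 2) (Fin 2) ℝ).PosSemidef)
    (hrec : ∀ k, 2 ≤ k → k ≤ m →
      (!![1, y (k - 1); y (k - 1), y k] : Matrix (Fin 2) (Fin 2) ℝ).PosSemidef) :
    (2 : ℝ) ^ (2 ^ m) ≤ y m := by
  have hy1 : (4 : ℝ) ≤ y 1 := by
    have := psd_aux 2 (y 1) h1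
    nlinarith
  -- strengthened induction
  suffices H : ∀ k, 1 ≤ k → k ≤ m → (2 : ℝ) ^ (2 ^ k) ≤ y k from H m hm le_rfl
  intro k
  induction k with
  | zero => omega
  | succ n ih =>
    intro _ hkm
    rcases Nat.eq_or_lt_of_le (Nat.one_le_iff_ne_zero.mpr (Nat.succ_ne_zero n)) with h | h
    · obtain rfl : n = 0 := by omega
      norm_num [hy1]
    · have hn1 : 1 ≤ n := by omega
      have hprev := ih hn1 (by omega)
      have hps := hrec (n + 1) (by omega) hkm
      simp only [Nat.add_sub_cancel] at hps
      have hb := psd_aux (y n) (y (n + 1)) hps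
      have hpos : (0:ℝ) < 2 ^ (2 ^ n) := by positivity
      calc (2:ℝ) ^ 2 ^ (n+1) = ((2:ℝ) ^ 2 ^ n) ^ 2 := by
            rw [← pow_mul]; ring_nf
        _ ≤ (y n) ^ 2 := by nlinarith
        _ ≤ y (n+1) := hb
end

section
/- The closed 'TV-screen' set {x ∈ ℝ² : 1 − x₁⁴ − x₂⁴ ≥ 0} equals the projection onto the x-variables of the set of (x,u) ∈ ℝ²×ℝ² satisfying the three LMIs [[1−u₁,u₂],[u₂,1+u₁]] ⪰ 0, [[1,x₁],[x₁,u₁]] ⪰ 0, [[1,x₂],[x₂,u₂]] ⪰ 0. -/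
/-- A 2×2 real symmetric matrix `!![a, b; b, c]` is positive semidefinite iff
`a ≥ 0`, `c ≥ 0`, and `b² ≤ a·c`. -/
lemma psd2_iff (a b c : ℝ) :
    (!![a, b; b, c] : Matrix (Fin 2) (Fin 2) ℝ).PosSemidef ↔
      0 ≤ a ∧ 0 ≤ c ∧ b ^ 2 ≤ a * c := by
  constructor
  · intro h
    have h1 := h.dotProduct_mulVec_nonneg ![1, 0]
    have h2 := h.dotProduct_mulVec_nonneg ![0, 1]
    have h3 := h.dotProduct_mulVec_nonneg ![b, -a]
    have h4 := h.dotProduct_mulVec_nonneg ![c, -b]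
    have h5 := h.dotProduct_mulVec_nonneg ![1, 1]
    have h6 := h.dotProduct_mulVec_nonneg ![1, -1]
    simp [dotProduct, Matrix.mulVec, Fin.sum_univ_two] at h1 h2 h3 h4 h5 h6
    refine ⟨h1, h2, ?_⟩
    by_contra hlt
    push_neg at hlt
    have hd : 0 < b ^ 2 - a * c := by nlinarith
    have hsd : (a + c) * (b ^ 2 - a * c) ≤ 0 := by nlinarith [h3, h4]
    have hs0 : a + c ≤ 0 := by
      by_contra hs
      push_neg at hs
      nlinarith [mul_pos hs hd]
    have haz : a = 0 := le_antisymm (by linarith) h1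
    have hcz : c = 0 := le_antisymm (by linarith) h2
    have hbz : b = 0 := by
      rw [haz, hcz] at h5 h6; linarith
    rw [haz, hcz, hbz] at hd; norm_num at hd
  · rintro ⟨ha, hc, hb⟩
    refine Matrix.PosSemidef.of_dotProduct_mulVec_nonneg ?_ ?_
    · ext i j
      fin_cases i <;> fin_cases j <;>
        simp [Matrix.conjTranspose, Matrix.transpose, Matrix.vecHead, Matrix.vecTail]
    · intro v
      simp [dotProduct, Matrix.mulVec, Fin.sum_univ_two]
      rcases eq_or_lt_of_le ha with ha0 | ha0
      · have hb0 : b = 0 := by nlinarith [sq_nonneg b]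
        rw [hb0, ← ha0]
        nlinarith [mul_nonneg hc (sq_nonneg (v 1))]
      · nlinarith [sq_nonneg (a * v 0 + b * v 1),
          mul_nonneg (sub_nonneg.2 hb) (sq_nonneg (v 1)), ha0]

/-- The TV screen `{x : 1 - x₁⁴ - x₂⁴ ≥ 0}` is the spectrahedral shadow obtained by
projecting (x,u) satisfying three 2×2 LMIs onto the x-variables. -/
theorem tv_screen_spectrahedral_shadow :
    {x : Fin 2 → ℝ | 0 ≤ 1 - (x 0) ^ 4 - (x 1) ^ 4} =
    {x : Fin 2 → ℝ | ∃ u : Fin 2 → ℝ,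
      (!![1 - u 0, u 1; u 1, 1 + u 0] : Matrix (Fin 2) (Fin 2) ℝ).PosSemidef ∧
      (!![1, x 0; x 0, u 0] : Matrix (Fin 2) (Fin 2) ℝ).PosSemidef ∧
      (!![1, x 1; x 1, u 1] : Matrix (Fin 2) (Fin 2) ℝ).PosSemidef} := by
  ext x
  simp only [Set.mem_setOf_eq, psd2_iff]
  constructor
  · intro hx
    refine ⟨![(x 0) ^ 2, (x 1) ^ 2], ?_, ?_, ?_⟩ <;>
      simp only [Matrix.cons_val_zero, Matrix.cons_val_one, Matrix.head_cons]
    · refine ⟨by nlinarith [sq_nonneg (x 0), sq_nonneg (x 1)], by positivity, ?_⟩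
      nlinarith [sq_nonneg (x 0), sq_nonneg (x 1)]
    · exact ⟨zero_le_one, sq_nonneg _, by nlinarith⟩
    · exact ⟨zero_le_one, sq_nonneg _, by nlinarith⟩
  · rintro ⟨u, ⟨h1a, h1c, h1b⟩, ⟨_, h2c, h2b⟩, ⟨_, h3c, h3b⟩⟩
    nlinarith [sq_nonneg (x 0), sq_nonneg (x 1), sq_nonneg (u 0), sq_nonneg (u 1),
      sq_nonneg (u 0 - x 0 ^ 2), sq_nonneg (u 1 - x 1 ^ 2), h2c, h3c]
end
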